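/- Let v = (a,b,c,d)ᵗ with F(v)=0, and set A=a+b, B=(a+b-c+d)/2, C=a+d. If the quadruple is primitive, i.e. gcd(a,b,c,d)=1, then gcd(A,B,C)=1. -/

import Mathlib

/-- The Descartes quadratic form. -/
def DescartesForm (a b c d : ℤ) : ℤ :=
  2 * (a ^ 2 + b ^ 2 + c ^ 2 + d ^ 2) - (a + b + c + d) ^ 2

lemma sq_parity (x : ℤ) : ∃ k, x * x = x + 2 * k := by
  rcases Int.even_or_odd x with ⟨w, hw⟩ | ⟨w, hw⟩
  · exact ⟨2 * w * w - w, by subst hw; ring⟩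
  · exact ⟨2 * w * w + w, by subst hw; ring⟩

theorem descartes_primitive_form (a b c d B : ℤ) (h : DescartesForm a b c d = 0)
    (hB : 2 * B = a + b - c + d)
    (hprim : Int.gcd (Int.gcd (Int.gcd a b) c) d = 1) :
    Int.gcd (Int.gcd (a + b) B) (a + d) = 1 := by
  by_contra hne
  obtain ⟨p, pp, hpg⟩ := Nat.exists_prime_and_dvd hne
  have hpg' : (p : ℤ) ∣ (Int.gcd (Int.gcd (a + b) B) (a + d) : ℤ) :=
    Int.natCast_dvd_natCast.mpr hpg
  have hA : (p : ℤ) ∣ a + b := hpg'.trans ((Int.gcd_dvd_left _ _).trans (Int.gcd_dvd_left _ _))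
  have hBp : (p : ℤ) ∣ B := hpg'.trans ((Int.gcd_dvd_left _ _).trans (Int.gcd_dvd_right _ _))
  have hC : (p : ℤ) ∣ a + d := hpg'.trans (Int.gcd_dvd_right _ _)
  have hE : (p : ℤ) ∣ c - d := by
    have hcd : c - d = (a + b) - 2 * B := by linarith
    rw [hcd]
    exact dvd_sub hA (Dvd.dvd.mul_left hBp 2)
  rcases eq_or_ne p 2 with rfl | hp2
  · -- p = 2 case
    rcases Int.even_or_odd a with ⟨w, hw⟩ | ⟨r, ha⟩
    · -- a even ⇒ all even, contradicting primitivity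
      have h2a : (2 : ℤ) ∣ a := ⟨w, by omega⟩
      have h2b : (2 : ℤ) ∣ b := by omega
      have h2d : (2 : ℤ) ∣ d := by omega
      have h2c : (2 : ℤ) ∣ c := by omega
      have : (2 : ℤ) ∣ ((Int.gcd (Int.gcd (Int.gcd a b) c) d : ℕ) : ℤ) :=
        Int.dvd_coe_gcd (Int.dvd_coe_gcd (Int.dvd_coe_gcd h2a h2b) h2c) h2d
      rw [hprim] at this
      norm_num at this
    · -- a odd ⇒ all odd
      obtain ⟨w, hw⟩ := hA
      obtain ⟨y, hy⟩ := hC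
      obtain ⟨s, hb⟩ : ∃ s, b = 2 * s + 1 := ⟨w - r - 1, by omega⟩
      obtain ⟨u, hd⟩ : ∃ u, d = 2 * u + 1 := ⟨y - r - 1, by omega⟩
      obtain ⟨t, hc⟩ : ∃ t, c = 2 * t + 1 := ⟨r + s + u - B + 1, by omega⟩
      subst ha hb hc hd
      have h4 : 4 * (2 * (r * r + s * s + t * t + u * u)) =
          4 * ((r + s + t + u) * (r + s + t + u) + 2 * (r + s + t + u) + 2) := by
        unfold DescartesForm at h
        linear_combination h
      have key := mul_left_cancel₀ (by norm_num : (4 : ℤ) ≠ 0) h4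
      obtain ⟨kr, hkr⟩ := sq_parity r
      obtain ⟨ks, hks⟩ := sq_parity s
      obtain ⟨kt, hkt⟩ := sq_parity t
      obtain ⟨ku, hku⟩ := sq_parity u
      obtain ⟨kσ, hkσ⟩ := sq_parity (r + s + t + u)
      rw [hkr, hks, hkt, hku, hkσ] at key
      have hσe : (2 : ℤ) ∣ (r + s + t + u) := by omega
      obtain ⟨m, hm⟩ := hσe
      obtain ⟨km, hkm⟩ := sq_parity m
      rw [hm] at hkσ
      have h4m : (2 * m) * (2 * m) = 4 * (m + 2 * km) := by rw [← hkm]; ring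
      rw [h4m] at hkσ
      omega
  · -- p odd
    have ppz : Prime (p : ℤ) := Nat.prime_iff_prime_int.mp pp
    have hd4a : (p : ℤ) ∣ 4 * (a * a) := by
      have hid : 4 * (a * a) = DescartesForm a b c d
          - ((a + b) * ((a + b) - 4 * a - 2 * c - 2 * d) + (c - d) * (c - d)) := by
        unfold DescartesForm; ring
      rw [hid, h]
      exact dvd_sub (dvd_zero _) (dvd_add (hA.mul_right _) (hE.mul_right _))
    have hpa : (p : ℤ) ∣ a := by
      rcases ppz.dvd_mul.mp hd4a with h4 | haa
      · exfalso
        have : p ∣ 4 := by exact_mod_cast h4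
        have : p ∣ 2 := pp.dvd_of_dvd_pow (n := 2) (by norm_num [this])
        exact hp2 ((Nat.prime_dvd_prime_iff_eq pp Nat.prime_two).mp this)
      · rcases ppz.dvd_mul.mp haa with h' | h' <;> exact h'
    have hpb : (p : ℤ) ∣ b := by
      have := dvd_sub hA hpa; simpa using this
    have hpd : (p : ℤ) ∣ d := by
      have := dvd_sub hC hpa; simpa using this
    have hpc : (p : ℤ) ∣ c := by
      have := dvd_add hE hpd; simpa using this
    have : (p : ℤ) ∣ ((Int.gcd (Int.gcd (Int.gcd a b) c) d : ℕ) : ℤ) :=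
      Int.dvd_coe_gcd (Int.dvd_coe_gcd (Int.dvd_coe_gcd hpa hpb) hpc) hpd
    rw [hprim] at this
    have : p ∣ 1 := by exact_mod_cast this
    simp [Nat.dvd_one] at this
    exact pp.ne_one this
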